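/- Let (e_k) be a nonnegative sequence satisfying e_{k+1} ≤ ρ₀ e_k + c · max_{1≤n≤T} e_{k−n} for all k ≥ 0, with 0 ≤ ρ₀ < 1 and c ≥ 0 such that ρ₀ + c < 1. Then there exist constants C ≥ 0 and θ ∈ (ρ₀ + c, 1) with e_k ≤ C θ^k for all k, i.e., the sequence converges linearly to zero. -/
import Mathlib

theorem delayed_recursion_linear_convergence (T : ℕ) (hT : 1 ≤ T)
    (hne : (Finset.Icc 1 T).Nonempty)
    (e : ℤ → ℝ) (rho c : ℝ)
    (hrho0 : 0 ≤ rho) (hrho1 : rho < 1) (hc : 0 ≤ c) (hsum : rho + c < 1)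
    (hnonneg : ∀ k : ℤ, -(T : ℤ) ≤ k → 0 ≤ e k)
    (hrec : ∀ k : ℤ, 0 ≤ k →
      e (k + 1) ≤ rho * e k + c * (Finset.Icc 1 T).sup' hne (fun n => e (k - n))) :
    ∃ C : ℝ, 0 ≤ C ∧ ∃ θ : ℝ, rho + c < θ ∧ θ < 1 ∧ ∀ k : ℕ, e k ≤ C * θ ^ k := by
  -- Step 1: find θ ∈ (rho+c, 1) with rho * θ^T + c ≤ θ^(T+1)
  have hcont : ContinuousAt (fun θ : ℝ => θ ^ (T + 1) - rho * θ ^ T - c) 1 := by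
    fun_prop
  have h1 : (0:ℝ) < (1:ℝ) ^ (T + 1) - rho * 1 ^ T - c := by simp; linarith
  have hev1 : ∀ᶠ θ in nhdsWithin 1 (Set.Iio (1:ℝ)),
      0 < θ ^ (T + 1) - rho * θ ^ T - c :=
    (hcont.eventually (eventually_gt_nhds h1)).filter_mono nhdsWithin_le_nhds
  have hev2 : ∀ᶠ θ in nhdsWithin 1 (Set.Iio (1:ℝ)), rho + c < θ :=
    (eventually_gt_nhds hsum).filter_mono nhdsWithin_le_nhds
  have hev3 : ∀ᶠ θ in nhdsWithin 1 (Set.Iio (1:ℝ)), θ < 1 :=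
    eventually_mem_nhdsWithin.mono (fun θ hθ => hθ)
  obtain ⟨θ, ⟨hθpow, hθlb⟩, hθ1⟩ := ((hev1.and hev2).and hev3).exists
  have hθ0 : (0:ℝ) < θ := lt_of_le_of_lt (by linarith) hθlb
  have hkey : rho * θ ^ T + c ≤ θ ^ (T + 1) := by linarith
  -- Step 2: set up constants
  have hM : (Finset.Icc (-(T:ℤ)) 0).Nonempty := ⟨0, by simp⟩
  set M : ℝ := (Finset.Icc (-(T:ℤ)) 0).sup' hM e with hMdef
  have hM0 : 0 ≤ M := le_trans (hnonneg 0 (by simp)) (Finset.le_sup' e (by simp : (0:ℤ) ∈ _))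
  set C : ℝ := M * θ ^ (-(T:ℤ)) with hCdef
  have hC0 : 0 ≤ C := mul_nonneg hM0 (zpow_nonneg hθ0.le _)
  refine ⟨C, hC0, θ, hθlb, hθ1, ?_⟩
  -- Step 3: main induction, over shifted index m ↦ (m : ℤ) - T
  have main : ∀ m : ℕ, e ((m : ℤ) - T) ≤ C * θ ^ ((m : ℤ) - T) := by
    intro m
    induction m using Nat.strong_induction_on with
    | _ m ih =>
      by_cases hm : m ≤ T
      · -- base case: index in [-T, 0]
        have hmem : (m : ℤ) - T ∈ Finset.Icc (-(T:ℤ)) 0 := by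
          simp; omega
        have h1 : e ((m : ℤ) - T) ≤ M := Finset.le_sup' e hmem
        have h2 : M ≤ C * θ ^ ((m : ℤ) - T) := by
          rw [hCdef, mul_assoc, ← zpow_add₀ hθ0.ne']
          nth_rewrite 1 [← mul_one M]
          refine mul_le_mul_of_nonneg_left ?_ hM0
          refine one_le_zpow_of_nonpos₀ hθ0 hθ1.le ?_
          omega
        linarith
      · push_neg at hm
        -- m ≥ T + 1, write index as k' + 1 with k' = m - 1 - T ≥ 0
        set k' : ℤ := (m : ℤ) - 1 - T with hk'
        have hk'0 : 0 ≤ k' := by omega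
        have heq : (m : ℤ) - T = k' + 1 := by omega
        rw [heq]
        have hrec' := hrec k' hk'0
        -- bound e k'
        have h1 : e k' ≤ C * θ ^ k' := by
          have := ih (m - 1) (by omega)
          have : ((m - 1 : ℕ) : ℤ) - T = k' := by omega
          rw [← this]; exact ih (m - 1) (by omega)
        -- bound the sup'
        have h2 : (Finset.Icc 1 T).sup' hne (fun n => e (k' - n)) ≤ C * θ ^ (k' - T) := by
          apply Finset.sup'_le
          intro n hn
          simp only [Finset.mem_Icc] at hn
          have hidx : k' - n = ((m - 1 - n : ℕ) : ℤ) - T := by omega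
          have hb := ih (m - 1 - n) (by omega)
          rw [hidx]
          refine hb.trans (mul_le_mul_of_nonneg_left ?_ hC0)
          refine zpow_le_zpow_right_of_le_one₀ hθ0 hθ1.le ?_
          omega
        have h3 : e (k' + 1) ≤ rho * (C * θ ^ k') + c * (C * θ ^ (k' - T)) := by
          refine hrec'.trans ?_
          gcongr
        refine h3.trans ?_
        have hexp1 : θ ^ k' = θ ^ (k' - T) * θ ^ (T:ℤ) := by
          rw [← zpow_add₀ hθ0.ne']; ring_nf
        have hexp2 : (θ:ℝ) ^ (k' + 1) = θ ^ (k' - T) * θ ^ ((T:ℤ) + 1) := by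
          rw [← zpow_add₀ hθ0.ne']; ring_nf
        rw [hexp1, hexp2]
        have hz : (0:ℝ) ≤ θ ^ (k' - T) := zpow_nonneg hθ0.le _
        have hcast1 : (θ:ℝ) ^ ((T:ℤ)) = θ ^ T := by
          rw [zpow_natCast]
        have hcast2 : (θ:ℝ) ^ ((T:ℤ) + 1) = θ ^ (T + 1) := by
          rw [← zpow_natCast θ (T+1)]; push_cast; ring_nf
        rw [hcast1, hcast2]
        calc rho * (C * (θ ^ (k' - T) * θ ^ T)) + c * (C * θ ^ (k' - T))
            = C * θ ^ (k' - T) * (rho * θ ^ T + c) := by ring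
          _ ≤ C * θ ^ (k' - T) * θ ^ (T + 1) := by
              exact mul_le_mul_of_nonneg_left hkey (mul_nonneg hC0 hz)
          _ = C * (θ ^ (k' - T) * θ ^ (T + 1)) := by ring
  -- Step 4: derive the natural-number statement
  intro k
  have := main (k + T)
  have hidx : ((k + T : ℕ) : ℤ) - T = (k : ℤ) := by push_cast; ring
  rw [hidx] at this
  calc e k ≤ C * θ ^ (k : ℤ) := this
    _ = C * θ ^ k := by rw [zpow_natCast]
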